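/- For every integer n ≥ 1, every integer X with 0 ≤ X ≤ n, and all r, s > 0, the function α ↦ ∫_{p_L(X,α)}^{p_U(X,α)} p^X (1-p)^{n-X} f(p; r, s) dp is continuous and strictly decreasing on (0,1). -/

import Mathlib

open MeasureTheory

/-- The Beta function `β(r,s) = ∫₀¹ t^(r-1) (1-t)^(s-1) dt`. -/
noncomputable def betaFun (r s : ℝ) : ℝ :=
  ∫ t in (0:ℝ)..1, t ^ (r - 1) * (1 - t) ^ (s - 1)

/-- The Beta(r,s) density `f(t;r,s) = t^(r-1)(1-t)^(s-1)/β(r,s)`. -/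
noncomputable def betaPDF (r s t : ℝ) : ℝ :=
  t ^ (r - 1) * (1 - t) ^ (s - 1) / betaFun r s

/-- The Beta(r,s) cumulative distribution function `∫₀ᵖ f(t;r,s) dt`. -/
noncomputable def betaCDF (r s p : ℝ) : ℝ :=
  ∫ t in (0:ℝ)..p, betaPDF r s t

/- The Beta quantile `B(q;r,s)`: the (unique, for `r,s>0`, `q∈(0,1)`) `t ∈ (0,1)`
with `∫₀ᵗ f(u;r,s) du = q`. -/
open Classical in
noncomputable def betaQuantile (r s q : ℝ) : ℝ :=
  if h : ∃ t, t ∈ Set.Ioo (0:ℝ) 1 ∧ betaCDF r s t = q then h.choose else 0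

/-- Lower Clopper–Pearson endpoint: `p_L(X,α) = B(α/2; X, n-X+1)` for `X ≥ 1`,
and `p_L(0,α) = 0`. -/
noncomputable def cpLower (n X : ℕ) (α : ℝ) : ℝ :=
  if X = 0 then 0 else betaQuantile (X : ℝ) ((n : ℝ) - X + 1) (α / 2)

/-- Upper Clopper–Pearson endpoint: `p_U(X,α) = B(1-α/2; X+1, n-X)` for `X ≤ n-1`,
and `p_U(n,α) = 1`. -/
noncomputable def cpUpper (n X : ℕ) (α : ℝ) : ℝ :=
  if X = n then 1 else betaQuantile ((X : ℝ) + 1) ((n : ℝ) - X) (1 - α / 2)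

namespace CPAux

open Set intervalIntegral

lemma intInt_base {r s : ℝ} (hr : 0 < r) (hs : 0 < s) :
    IntervalIntegrable (fun t : ℝ => t ^ (r-1) * (1-t) ^ (s-1)) volume 0 1 := by
  have h1 : IntervalIntegrable (fun t : ℝ => t ^ (r-1) * (1-t) ^ (s-1)) volume 0 (1/2) := by
    apply (intervalIntegrable_rpow' (by linarith : (-1:ℝ) < r - 1)).mul_continuousOn
    apply ContinuousOn.rpow_const (continuousOn_const.sub continuousOn_id)
    intro x hx
    rw [Set.uIcc_of_le (by norm_num)] at hx
    exact Or.inl (by simp only [Pi.sub_apply, id]; nlinarith [hx.2])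
  have h2 : IntervalIntegrable (fun t : ℝ => t ^ (r-1) * (1-t) ^ (s-1)) volume (1/2) 1 := by
    have hb : IntervalIntegrable (fun t : ℝ => (1-t) ^ (s-1)) volume (1/2) 1 := by
      have := (intervalIntegrable_rpow' (by linarith : (-1:ℝ) < s - 1)
        (a := 0) (b := 1/2)).comp_sub_left 1
      norm_num at this ⊢; simpa using this.symm
    have := hb.continuousOn_mul (g := fun t : ℝ => t ^ (r-1)) ?_
    · exact this
    · apply ContinuousOn.rpow_const continuousOn_id
      intro x hx
      rw [Set.uIcc_of_le (by norm_num)] at hx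
      exact Or.inl (by simp only [id]; nlinarith [hx.1])
  exact h1.trans h2

lemma base_pos {r s : ℝ} (t : ℝ) (ht : t ∈ Ioo (0:ℝ) 1) :
    0 < t ^ (r-1) * (1-t) ^ (s-1) :=
  mul_pos (Real.rpow_pos_of_pos ht.1 _)
    (Real.rpow_pos_of_pos (by linarith [ht.2]) _)

lemma betaFun_pos {r s : ℝ} (hr : 0 < r) (hs : 0 < s) : 0 < betaFun r s :=
  intervalIntegral_pos_of_pos_on (intInt_base hr hs) (fun t ht => base_pos t ht) one_pos

lemma betaPDF_pos {r s : ℝ} (hr : 0 < r) (hs : 0 < s) (t : ℝ) (ht : t ∈ Ioo (0:ℝ) 1) :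
    0 < betaPDF r s t :=
  div_pos (base_pos t ht) (betaFun_pos hr hs)

lemma intInt_betaPDF {r s : ℝ} (hr : 0 < r) (hs : 0 < s) :
    IntervalIntegrable (betaPDF r s) volume 0 1 := by
  have := (intInt_base hr hs).div_const (betaFun r s)
  exact this

section Primitive

variable {w : ℝ → ℝ}

lemma intInt_sub (hw : IntervalIntegrable w volume 0 1) {a b : ℝ}
    (ha : a ∈ Icc (0:ℝ) 1) (hb : b ∈ Icc (0:ℝ) 1) : IntervalIntegrable w volume a b :=
  hw.mono_set (uIcc_subset_uIcc (by rwa [uIcc_of_le zero_le_one])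
    (by rwa [uIcc_of_le zero_le_one]))

lemma primitive_eq (hw : IntervalIntegrable w volume 0 1) {a b : ℝ}
    (ha : a ∈ Icc (0:ℝ) 1) (hb : b ∈ Icc (0:ℝ) 1) :
    (∫ t in a..b, w t) = (∫ t in (0:ℝ)..b, w t) - ∫ t in (0:ℝ)..a, w t := by
  rw [eq_sub_iff_add_eq, add_comm]
  exact integral_add_adjacent_intervals
    (intInt_sub hw ⟨le_refl 0, zero_le_one⟩ ha) (intInt_sub hw ha hb)

lemma primitive_continuousOn (hw : IntervalIntegrable w volume 0 1) :
    ContinuousOn (fun p => ∫ t in (0:ℝ)..p, w t) (Icc (0:ℝ) 1) := by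
  have := continuousOn_primitive_interval' (μ := volume) (b₁ := (0:ℝ)) (b₂ := 1) (a := 0)
    hw (by rw [uIcc_of_le zero_le_one]; exact ⟨le_refl 0, zero_le_one⟩)
  rwa [uIcc_of_le zero_le_one] at this

lemma primitive_strictMonoOn (hw : IntervalIntegrable w volume 0 1)
    (hpos : ∀ t ∈ Ioo (0:ℝ) 1, 0 < w t) :
    StrictMonoOn (fun p => ∫ t in (0:ℝ)..p, w t) (Icc (0:ℝ) 1) := by
  intro a ha b hb hab
  have h := intervalIntegral_pos_of_pos_on (intInt_sub hw ha hb)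
    (fun x hx => hpos x ⟨lt_of_le_of_lt ha.1 hx.1, lt_of_lt_of_le hx.2 hb.2⟩) hab
  rw [primitive_eq hw ha hb] at h
  simp only
  linarith

end Primitive

variable {r s : ℝ}

lemma betaCDF_continuousOn (hr : 0 < r) (hs : 0 < s) :
    ContinuousOn (betaCDF r s) (Icc (0:ℝ) 1) :=
  primitive_continuousOn (intInt_betaPDF hr hs)

lemma betaCDF_strictMonoOn (hr : 0 < r) (hs : 0 < s) :
    StrictMonoOn (betaCDF r s) (Icc (0:ℝ) 1) :=
  primitive_strictMonoOn (intInt_betaPDF hr hs) (betaPDF_pos hr hs)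

lemma betaCDF_zero : betaCDF r s 0 = 0 := integral_same

lemma betaCDF_one (hr : 0 < r) (hs : 0 < s) : betaCDF r s 1 = 1 := by
  rw [betaCDF]
  simp only [betaPDF]
  rw [intervalIntegral.integral_div]
  exact div_self (ne_of_gt (betaFun_pos hr hs))

lemma exists_quantile (hr : 0 < r) (hs : 0 < s) {q : ℝ} (hq : q ∈ Ioo (0:ℝ) 1) :
    ∃ t, t ∈ Ioo (0:ℝ) 1 ∧ betaCDF r s t = q := by
  have h := intermediate_value_Ioo zero_le_one (betaCDF_continuousOn hr hs)
  rw [betaCDF_zero, betaCDF_one hr hs] at h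
  obtain ⟨t, ht, hte⟩ := h hq
  exact ⟨t, ht, hte⟩

lemma quantile_spec (hr : 0 < r) (hs : 0 < s) {q : ℝ} (hq : q ∈ Ioo (0:ℝ) 1) :
    betaQuantile r s q ∈ Ioo (0:ℝ) 1 ∧ betaCDF r s (betaQuantile r s q) = q := by
  rw [betaQuantile, dif_pos (exists_quantile hr hs hq)]
  exact (exists_quantile hr hs hq).choose_spec

lemma quantile_strictMonoOn (hr : 0 < r) (hs : 0 < s) :
    StrictMonoOn (betaQuantile r s) (Ioo (0:ℝ) 1) := by
  intro q1 h1 q2 h2 h12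
  have s1 := quantile_spec hr hs h1
  have s2 := quantile_spec hr hs h2
  have h := (betaCDF_strictMonoOn hr hs).lt_iff_lt
    (Ioo_subset_Icc_self s1.1) (Ioo_subset_Icc_self s2.1)
  rw [← h, s1.2, s2.2]
  exact h12

lemma quantile_image (hr : 0 < r) (hs : 0 < s) :
    betaQuantile r s '' Ioo (0:ℝ) 1 = Ioo (0:ℝ) 1 := by
  apply Subset.antisymm
  · rintro _ ⟨q, hq, rfl⟩
    exact (quantile_spec hr hs hq).1
  · intro t ht
    have h0 : betaCDF r s 0 < betaCDF r s t := by
      rw [betaCDF_zero]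
      rw [← betaCDF_zero (r := r) (s := s)]
      exact (betaCDF_strictMonoOn hr hs) ⟨le_refl 0, zero_le_one⟩ (Ioo_subset_Icc_self ht) ht.1
    have h1 : betaCDF r s t < betaCDF r s 1 :=
      (betaCDF_strictMonoOn hr hs) (Ioo_subset_Icc_self ht) ⟨zero_le_one, le_refl 1⟩ ht.2
    rw [betaCDF_zero] at h0
    rw [betaCDF_one hr hs] at h1
    have hct : betaCDF r s t ∈ Ioo (0:ℝ) 1 := ⟨h0, h1⟩
    refine ⟨betaCDF r s t, hct, ?_⟩
    have sp := quantile_spec hr hs hct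
    exact (betaCDF_strictMonoOn hr hs).injOn
      (Ioo_subset_Icc_self sp.1) (Ioo_subset_Icc_self ht) sp.2

lemma quantile_continuousOn (hr : 0 < r) (hs : 0 < s) :
    ContinuousOn (betaQuantile r s) (Ioo (0:ℝ) 1) := by
  intro q hq
  apply ContinuousAt.continuousWithinAt
  apply (quantile_strictMonoOn hr hs).continuousAt_of_image_mem_nhds
    (isOpen_Ioo.mem_nhds hq)
  rw [quantile_image hr hs]
  exact isOpen_Ioo.mem_nhds (quantile_spec hr hs hq).1

end CPAux

/-- The summand `α ↦ ∫_{p_L(X,α)}^{p_U(X,α)} p^X (1-p)^(n-X) f(p;r,s) dp` of the mean coverage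
is continuous and strictly decreasing on (0,1). -/
theorem meanCoverage_summand_continuous_strictAnti (n X : ℕ) (hn : 1 ≤ n) (hX : X ≤ n)
    (r s : ℝ) (hr : 0 < r) (hs : 0 < s) :
    ContinuousOn
      (fun α : ℝ => ∫ p in (cpLower n X α)..(cpUpper n X α),
        p ^ X * (1 - p) ^ (n - X) * betaPDF r s p) (Set.Ioo (0:ℝ) 1) ∧
    StrictAntiOn
      (fun α : ℝ => ∫ p in (cpLower n X α)..(cpUpper n X α),
        p ^ X * (1 - p) ^ (n - X) * betaPDF r s p) (Set.Ioo (0:ℝ) 1) := by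
  classical
  -- the weight function and its primitive
  set w : ℝ → ℝ := fun p => p ^ X * (1 - p) ^ (n - X) * betaPDF r s p with hw_def
  have hwint : IntervalIntegrable w volume 0 1 := by
    apply (CPAux.intInt_betaPDF hr hs).continuousOn_mul
    exact ((continuous_pow X).mul
      ((continuous_const.sub continuous_id).pow (n - X))).continuousOn
  have hwpos : ∀ t ∈ Set.Ioo (0:ℝ) 1, 0 < w t := by
    intro t ht
    exact mul_pos (mul_pos (pow_pos ht.1 X) (pow_pos (by linarith [ht.2]) (n - X)))
      (CPAux.betaPDF_pos hr hs t ht)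
  set F : ℝ → ℝ := fun p => ∫ t in (0:ℝ)..p, w t with hF_def
  have hFc : ContinuousOn F (Set.Icc (0:ℝ) 1) := CPAux.primitive_continuousOn hwint
  have hFm : StrictMonoOn F (Set.Icc (0:ℝ) 1) := CPAux.primitive_strictMonoOn hwint hwpos
  have half_mem : ∀ α ∈ Set.Ioo (0:ℝ) 1, α / 2 ∈ Set.Ioo (0:ℝ) 1 := by
    intro α hα
    exact ⟨by linarith [hα.1], by linarith [hα.2]⟩
  have half_mem' : ∀ α ∈ Set.Ioo (0:ℝ) 1, 1 - α / 2 ∈ Set.Ioo (0:ℝ) 1 := by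
    intro α hα
    exact ⟨by linarith [hα.2], by linarith [hα.1]⟩
  -- parameter positivity for the quantiles
  have hcast_le : (X:ℝ) ≤ (n:ℝ) := Nat.cast_le.mpr hX
  have hs1 : (0:ℝ) < (n:ℝ) - X + 1 := by linarith
  -- lower endpoint facts
  have hLmem : ∀ α ∈ Set.Ioo (0:ℝ) 1, cpLower n X α ∈ Set.Icc (0:ℝ) 1 := by
    intro α hα
    by_cases hX0 : X = 0
    · simp [cpLower, hX0]
    · have hr1 : (0:ℝ) < (X:ℝ) := Nat.cast_pos.mpr (Nat.pos_of_ne_zero hX0)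
      rw [cpLower, if_neg hX0]
      exact Set.Ioo_subset_Icc_self
        (CPAux.quantile_spec hr1 hs1 (half_mem α hα)).1
  have hUmem : ∀ α ∈ Set.Ioo (0:ℝ) 1, cpUpper n X α ∈ Set.Icc (0:ℝ) 1 := by
    intro α hα
    by_cases hXn : X = n
    · simp [cpUpper, hXn]
    · have hr2 : (0:ℝ) < (X:ℝ) + 1 := by positivity
      have hs2 : (0:ℝ) < (n:ℝ) - X :=
        sub_pos.mpr (Nat.cast_lt.mpr (lt_of_le_of_ne hX hXn))
      rw [cpUpper, if_neg hXn]
      exact Set.Ioo_subset_Icc_self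
        (CPAux.quantile_spec hr2 hs2 (half_mem' α hα)).1
  -- continuity of the endpoints
  have hLcont : ContinuousOn (cpLower n X) (Set.Ioo (0:ℝ) 1) := by
    by_cases hX0 : X = 0
    · have hconst : cpLower n X = fun _ : ℝ => (0:ℝ) := funext fun α => by
        rw [cpLower, if_pos hX0]
      rw [hconst]
      exact continuousOn_const
    · have hr1 : (0:ℝ) < (X:ℝ) := Nat.cast_pos.mpr (Nat.pos_of_ne_zero hX0)
      have hfun : cpLower n X
          = fun α : ℝ => betaQuantile (X : ℝ) ((n : ℝ) - X + 1) (α / 2) :=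
        funext fun α => by rw [cpLower, if_neg hX0]
      rw [hfun]
      exact (CPAux.quantile_continuousOn hr1 hs1).comp
        ((continuous_id.div_const 2).continuousOn) half_mem
  have hUcont : ContinuousOn (cpUpper n X) (Set.Ioo (0:ℝ) 1) := by
    by_cases hXn : X = n
    · have hconst : cpUpper n X = fun _ : ℝ => (1:ℝ) := funext fun α => by
        rw [cpUpper, if_pos hXn]
      rw [hconst]
      exact continuousOn_const
    · have hr2 : (0:ℝ) < (X:ℝ) + 1 := by positivity
      have hs2 : (0:ℝ) < (n:ℝ) - X :=
        sub_pos.mpr (Nat.cast_lt.mpr (lt_of_le_of_ne hX hXn))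
      have hfun : cpUpper n X
          = fun α : ℝ => betaQuantile ((X : ℝ) + 1) ((n : ℝ) - X) (1 - α / 2) :=
        funext fun α => by rw [cpUpper, if_neg hXn]
      rw [hfun]
      exact (CPAux.quantile_continuousOn hr2 hs2).comp
        ((continuous_const.sub (continuous_id.div_const 2)).continuousOn) half_mem'
  -- key rewriting: the integral equals F at the endpoints
  have key : ∀ α ∈ Set.Ioo (0:ℝ) 1,
      (∫ p in (cpLower n X α)..(cpUpper n X α), w p)
        = F (cpUpper n X α) - F (cpLower n X α) := fun α hα =>
    CPAux.primitive_eq hwint (hLmem α hα) (hUmem α hα)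
  constructor
  · apply ContinuousOn.congr
      (f := fun α => F (cpUpper n X α) - F (cpLower n X α))
    · exact (hFc.comp hUcont fun α hα => hUmem α hα).sub
        (hFc.comp hLcont fun α hα => hLmem α hα)
    · intro α hα
      exact key α hα
  · intro α₁ h₁ α₂ h₂ h₁₂
    simp only
    rw [key α₁ h₁, key α₂ h₂]
    by_cases hXn : X = n
    · -- upper endpoint constant 1; lower strictly increases (X = n ≥ 1)
      have hX0 : X ≠ 0 := by omega
      have hr1 : (0:ℝ) < (X:ℝ) := Nat.cast_pos.mpr (Nat.pos_of_ne_zero hX0)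
      have hU : cpUpper n X α₁ = cpUpper n X α₂ := by simp [cpUpper, hXn]
      have hL : cpLower n X α₁ < cpLower n X α₂ := by
        rw [cpLower, if_neg hX0, cpLower, if_neg hX0]
        exact CPAux.quantile_strictMonoOn hr1 hs1 (half_mem α₁ h₁) (half_mem α₂ h₂)
          (by linarith)
      have := hFm (hLmem α₁ h₁) (hLmem α₂ h₂) hL
      rw [hU]
      linarith
    · -- upper endpoint strictly decreases; lower weakly increases
      have hr2 : (0:ℝ) < (X:ℝ) + 1 := by positivity
      have hs2 : (0:ℝ) < (n:ℝ) - X :=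
        sub_pos.mpr (Nat.cast_lt.mpr (lt_of_le_of_ne hX hXn))
      have hU : cpUpper n X α₂ < cpUpper n X α₁ := by
        rw [cpUpper, if_neg hXn, cpUpper, if_neg hXn]
        exact CPAux.quantile_strictMonoOn hr2 hs2 (half_mem' α₂ h₂) (half_mem' α₁ h₁)
          (by linarith)
      have hFU := hFm (hUmem α₂ h₂) (hUmem α₁ h₁) hU
      have hFL : F (cpLower n X α₁) ≤ F (cpLower n X α₂) := by
        by_cases hX0 : X = 0
        · simp [cpLower, hX0]
        · have hr1 : (0:ℝ) < (X:ℝ) := Nat.cast_pos.mpr (Nat.pos_of_ne_zero hX0)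
          have hL : cpLower n X α₁ < cpLower n X α₂ := by
            rw [cpLower, if_neg hX0, cpLower, if_neg hX0]
            exact CPAux.quantile_strictMonoOn hr1 hs1 (half_mem α₁ h₁) (half_mem α₂ h₂)
              (by linarith)
          exact (hFm (hLmem α₁ h₁) (hLmem α₂ h₂) hL).le
      linarith
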